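/- Let k ≥ 2 and t ≥ 3 be integers, and let H be a k-uniform hypergraph on n vertices in which every pair of distinct vertices is contained in exactly one edge. If e·C(t,2)·C(k,2)·C(n−2, t−2)·2^{1−C(t,2)} < 1 (where e is Euler's number), then there exists a 2-edge-coloring of H that contains no monochromatic Berge copy of the complete graph K_t. -/

import Mathlib

/-- `G` has a Berge copy in the hypergraph `H` (a finite set of edges, each a finite
set of vertices) all of whose hyperedges satisfy the predicate `P`: there are distinct
core vertices `y v` (one for each vertex `v` of `G`) and distinct hyperedges `f e`
(one for each edge `e` of `G`) such that each edge `e = uv` of `G` satisfies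
`{y u, y v} ⊆ f e`. -/
def HasBergeCopy {α V : Type*} (G : SimpleGraph α) (H : Finset (Finset V))
    (P : Finset V → Prop) : Prop :=
  ∃ (y : α → V) (f : Sym2 α → Finset V),
    Function.Injective y ∧ Set.InjOn f G.edgeSet ∧
      ∀ e ∈ G.edgeSet, f e ∈ H ∧ P (f e) ∧ ∀ v ∈ e, y v ∈ f e

set_option linter.unusedSectionVars false
set_option maxHeartbeats 1000000

open Finset

section LLLabstract



variable {ι : Type*} [Fintype ι] [DecidableEq ι]

/-- combine two colorings: take `σ` on `s`, `τ` off `s`. -/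
private def combineOn (s : Finset ι) (σ τ : ι → Bool) : ι → Bool :=
  fun i => if i ∈ s then σ i else τ i

private lemma indep_card (s : Finset ι) (P Q : Finset (ι → Bool))
    (hP : ∀ σ τ, (∀ i ∈ s, σ i = τ i) → σ ∈ P → τ ∈ P)
    (hQ : ∀ σ τ, (∀ i ∉ s, σ i = τ i) → σ ∈ Q → τ ∈ Q) :
    (P ∩ Q).card * 2 ^ Fintype.card ι = P.card * Q.card := by
  have h2 : (univ : Finset (ι → Bool)).card = 2 ^ Fintype.card ι := by
    simp [Fintype.card_fun]
  rw [← h2, ← Finset.card_product, ← Finset.card_product]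
  apply Finset.card_bij' (fun p _ => (combineOn s p.1 p.2, combineOn s p.2 p.1))
    (fun p _ => (combineOn s p.1 p.2, combineOn s p.2 p.1))
  · rintro ⟨σ, τ⟩ hp
    simp only [Finset.mem_product, Finset.mem_inter] at hp ⊢
    obtain ⟨⟨hσP, hσQ⟩, -⟩ := hp
    constructor
    · exact hP σ _ (fun i hi => by simp [combineOn, hi]) hσP
    · exact hQ σ _ (fun i hi => by simp [combineOn, hi]) hσQ
  · rintro ⟨σ, τ⟩ hp
    simp only [Finset.mem_product] at hp ⊢
    obtain ⟨hσP, hτQ⟩ := hp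
    refine ⟨Finset.mem_inter.2 ⟨?_, ?_⟩, Finset.mem_univ _⟩
    · exact hP σ _ (fun i hi => by simp [combineOn, hi]) hσP
    · exact hQ τ _ (fun i hi => by simp [combineOn, hi]) hτQ
  · rintro ⟨σ, τ⟩ _
    ext i <;> by_cases hi : i ∈ s <;> simp [combineOn, hi]
  · rintro ⟨σ, τ⟩ _
    ext i <;> by_cases hi : i ∈ s <;> simp [combineOn, hi]

private lemma card_fixed (s : Finset ι) (b : Bool) :
    (univ.filter (fun σ : ι → Bool => ∀ i ∈ s, σ i = b)).card
      = 2 ^ (Fintype.card ι - s.card) := by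
  have hcard : Fintype.card {i // i ∉ s} = Fintype.card ι - s.card := by
    have := Fintype.card_subtype_compl (fun i => i ∈ s)
    simpa using this
  have h2 : (2:ℕ) ^ (Fintype.card ι - s.card) = Fintype.card ({i // i ∉ s} → Bool) := by
    rw [Fintype.card_fun, ← hcard]; rfl
  rw [h2, ← Finset.card_univ]
  apply Finset.card_bij' (fun σ _ => fun i : {i // i ∉ s} => σ i.1)
    (fun g _ => fun i => if h : i ∈ s then b else g ⟨i, h⟩)
  · intro σ _; exact Finset.mem_univ _
  · intro g _
    simp only [Finset.mem_filter, Finset.mem_univ, true_and]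
    intro i hi; simp [hi]
  · intro σ hσ
    simp only [Finset.mem_filter, Finset.mem_univ, true_and] at hσ
    ext i; by_cases hi : i ∈ s <;> simp [hi, hσ i]
  · intro g _
    ext ⟨i, hi⟩; simp [hi]



variable {ι κ : Type*} [Fintype ι] [DecidableEq ι] [DecidableEq κ]

private def goodSet (A : κ → Finset (ι → Bool)) (T : Finset κ) : Finset (ι → Bool) :=
  univ.filter (fun σ => ∀ j ∈ T, σ ∉ A j)

private lemma goodSet_insert (A : κ → Finset (ι → Bool)) (T : Finset κ) (j : κ) :
    goodSet A (insert j T) = goodSet A T \ A j := by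
  ext σ
  simp only [goodSet, mem_filter, mem_univ, true_and, mem_insert, mem_sdiff]
  constructor
  · intro h
    exact ⟨fun j' hj' => h j' (Or.inr hj'), h j (Or.inl rfl)⟩
  · rintro ⟨hT, hj⟩ j' hj'
    rcases hj' with rfl | hj'
    · exact hj
    · exact hT j' hj'

private lemma goodSet_anti (A : κ → Finset (ι → Bool)) {T T' : Finset κ} (h : T' ⊆ T) :
    goodSet A T ⊆ goodSet A T' := by
  intro σ hσ
  simp only [goodSet, mem_filter, mem_univ, true_and] at hσ ⊢
  exact fun j hj => hσ j (h hj)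

theorem lll_main (J : Finset κ) (supp : κ → Finset ι) (A : κ → Finset (ι → Bool))
    (hdep : ∀ j, ∀ σ τ : ι → Bool, (∀ i ∈ supp j, σ i = τ i) → σ ∈ A j → τ ∈ A j)
    (hsupp : ∀ j ∈ J, (supp j).Nonempty)
    (d : ℕ) (x : ℝ) (hx0 : 0 < x) (hx1 : x < 1)
    (hΓ : ∀ j ∈ J, (J.filter (fun j' => ¬ Disjoint (supp j) (supp j'))).card ≤ d + 1)
    (hp : ∀ j ∈ J, ((A j).card : ℝ) ≤ x * (1-x)^d * 2 ^ Fintype.card ι) :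
    ∃ σ : ι → Bool, ∀ j ∈ J, σ ∉ A j := by
  have h1x : (0:ℝ) < 1 - x := by linarith
  have hpow : (0:ℝ) < (2:ℝ) ^ Fintype.card ι := by positivity
  -- the key claim
  have key : ∀ N : ℕ, ∀ T : Finset κ, ∀ j : κ, T.card ≤ N → T ⊆ J → j ∈ J → j ∉ T →
      (((A j) ∩ goodSet A T).card : ℝ) ≤ x * (goodSet A T).card := by
    intro N
    induction N using Nat.strong_induction_on with
    | _ N IH =>
      intro T j hTN hTJ hjJ hjT
      set T1 : Finset κ := T.filter (fun j' => ¬ Disjoint (supp j) (supp j')) with hT1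
      set T2 : Finset κ := T \ T1 with hT2
      have hT1T : T1 ⊆ T := filter_subset _ _
      have hT2T : T2 ⊆ T := sdiff_subset
      -- independence
      have hind : (((A j) ∩ goodSet A T2).card : ℝ) * 2 ^ Fintype.card ι
          = (A j).card * (goodSet A T2).card := by
        have hQdep : ∀ σ τ : ι → Bool, (∀ i ∉ supp j, σ i = τ i) →
            σ ∈ goodSet A T2 → τ ∈ goodSet A T2 := by
          intro σ τ hagree hσ
          simp only [goodSet, mem_filter, mem_univ, true_and] at hσ ⊢
          intro j' hj' hτA
          have hdisj : Disjoint (supp j) (supp j') := by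
            have := (mem_sdiff.1 hj').2
            simp only [hT1, mem_filter, not_and, not_not] at this
            exact this ((mem_sdiff.1 hj').1)
          refine hσ j' hj' ?_
          exact hdep j' τ σ (fun i hi => ((hagree i (Finset.disjoint_right.1 hdisj hi))).symm) hτA
        have hnat := indep_card (supp j) (A j) (goodSet A T2) (hdep j) hQdep
        exact_mod_cast congrArg (fun n : ℕ => (n:ℝ)) hnat
      -- sub-induction: inserting elements of T1 one at a time
      have sub : ∀ V : Finset κ, V ⊆ T1 →
          (1-x) ^ V.card * ((goodSet A T2).card : ℝ) ≤ ((goodSet A (T2 ∪ V)).card : ℝ) := by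
        intro V
        induction V using Finset.induction_on with
        | empty => intro _; simp
        | @insert a V ha IHV =>
          intro hVT1
          have haT1 : a ∈ T1 := hVT1 (mem_insert_self a V)
          have hVsub : V ⊆ T1 := (Finset.insert_subset_iff.1 hVT1).2
          have hU : T2 ∪ V ⊆ J := fun z hz => by
            rcases mem_union.1 hz with hz | hz
            · exact hTJ (hT2T hz)
            · exact hTJ (hT1T (hVsub hz))
          have haU : a ∉ T2 ∪ V := by
            simp only [mem_union]
            rintro (h | h)
            · exact (mem_sdiff.1 h).2 haT1
            · exact ha h
          have hUcard : (T2 ∪ V).card ≤ T.card - 1 := by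
            have hsub : T2 ∪ V ⊆ T.erase a := by
              intro z hz
              refine Finset.mem_erase.2 ⟨?_, ?_⟩
              · rintro rfl; exact haU hz
              · rcases mem_union.1 hz with hz | hz
                · exact hT2T hz
                · exact hT1T (hVsub hz)
            calc (T2 ∪ V).card ≤ (T.erase a).card := card_le_card hsub
              _ = T.card - 1 := Finset.card_erase_of_mem (hT1T haT1)
          have hTpos : 1 ≤ T.card := Finset.card_pos.2 ⟨a, hT1T haT1⟩
          have hNpos : 1 ≤ N := le_trans hTpos hTN
          have hkey := IH (N-1) (by omega) (T2 ∪ V) a (by omega) hU (hTJ (hT1T haT1)) haU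
          have hins : goodSet A (T2 ∪ insert a V) = goodSet A (T2 ∪ V) \ A a := by
            rw [Finset.union_insert, goodSet_insert]
          have hcard : ((goodSet A (T2 ∪ insert a V)).card : ℝ)
              = (goodSet A (T2 ∪ V)).card - ((A a ∩ goodSet A (T2 ∪ V)).card : ℝ) := by
            rw [hins]
            have := Finset.card_inter_add_card_sdiff (goodSet A (T2 ∪ V)) (A a)
            have h' : (goodSet A (T2 ∪ V) ∩ A a).card + (goodSet A (T2 ∪ V) \ A a).card
                = (goodSet A (T2 ∪ V)).card := this
            rw [Finset.inter_comm] at h'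
            push_cast [← h']
            ring
          rw [hcard]
          have : (1-x) * ((1-x) ^ V.card * ((goodSet A T2).card : ℝ))
              ≤ (1-x) * ((goodSet A (T2 ∪ V)).card : ℝ) :=
            mul_le_mul_of_nonneg_left (IHV hVsub) (le_of_lt h1x)
          calc (1-x) ^ (insert a V).card * ((goodSet A T2).card : ℝ)
              = (1-x) * ((1-x) ^ V.card * ((goodSet A T2).card : ℝ)) := by
                rw [Finset.card_insert_of_notMem ha]; ring
            _ ≤ (1-x) * ((goodSet A (T2 ∪ V)).card : ℝ) := this
            _ ≤ (goodSet A (T2 ∪ V)).card - ((A a ∩ goodSet A (T2 ∪ V)).card : ℝ) := by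
                nlinarith [hkey]
      have hTunion : T2 ∪ T1 = T := by
        rw [hT2]; exact Finset.sdiff_union_of_subset hT1T
      have hd : T1.card ≤ d := by
        have hsub : T1 ⊆ (J.filter (fun j' => ¬ Disjoint (supp j) (supp j'))).erase j := by
          intro z hz
          refine Finset.mem_erase.2 ⟨?_, ?_⟩
          · rintro rfl; exact hjT (hT1T hz)
          · have := mem_filter.1 hz
            exact mem_filter.2 ⟨hTJ this.1, this.2⟩
        have hjmem : j ∈ J.filter (fun j' => ¬ Disjoint (supp j) (supp j')) := by
          refine mem_filter.2 ⟨hjJ, ?_⟩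
          intro hdisj
          have := (Finset.disjoint_self_iff_empty _).1 hdisj
          exact (hsupp j hjJ).ne_empty this
        calc T1.card ≤ _ := card_le_card hsub
          _ = _ - 1 := Finset.card_erase_of_mem hjmem
          _ ≤ d := by have := hΓ j hjJ; omega
      -- main chain
      have hmono : ((A j ∩ goodSet A T).card : ℝ) ≤ ((A j ∩ goodSet A T2).card : ℝ) := by
        exact_mod_cast card_le_card (Finset.inter_subset_inter_left (goodSet_anti A hT2T))
      have hgoodT : (1-x) ^ T1.card * ((goodSet A T2).card : ℝ) ≤ ((goodSet A T).card : ℝ) := by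
        have := sub T1 (le_refl T1)
        rwa [hTunion] at this
      have hpj := hp j hjJ
      -- multiply out
      have step1 : ((A j ∩ goodSet A T).card : ℝ) * 2 ^ Fintype.card ι
          ≤ (A j).card * (goodSet A T2).card := by
        rw [← hind]
        exact mul_le_mul_of_nonneg_right hmono (le_of_lt hpow)
      have step2 : ((A j).card : ℝ) * (goodSet A T2).card
          ≤ x * (1-x)^d * 2 ^ Fintype.card ι * (goodSet A T2).card :=
        mul_le_mul_of_nonneg_right hpj (Nat.cast_nonneg _)
      have step3 : x * (1-x)^d * ((goodSet A T2).card : ℝ)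
          ≤ x * (1-x)^T1.card * (goodSet A T2).card := by
        have : ((1:ℝ)-x)^d ≤ (1-x)^T1.card :=
          pow_le_pow_of_le_one (le_of_lt h1x) (by linarith) hd
        gcongr
      have step4 : x * ((1-x)^T1.card * ((goodSet A T2).card : ℝ)) ≤ x * (goodSet A T).card :=
        mul_le_mul_of_nonneg_left hgoodT (le_of_lt hx0)
      have : ((A j ∩ goodSet A T).card : ℝ) * 2 ^ Fintype.card ι
          ≤ x * (goodSet A T).card * 2 ^ Fintype.card ι := by
        calc ((A j ∩ goodSet A T).card : ℝ) * 2 ^ Fintype.card ι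
            ≤ (A j).card * (goodSet A T2).card := step1
          _ ≤ x * (1-x)^d * 2 ^ Fintype.card ι * (goodSet A T2).card := step2
          _ = x * (1-x)^d * ((goodSet A T2).card : ℝ) * 2 ^ Fintype.card ι := by ring
          _ ≤ x * (1-x)^T1.card * (goodSet A T2).card * 2 ^ Fintype.card ι := by
              exact mul_le_mul_of_nonneg_right step3 (le_of_lt hpow)
          _ = x * ((1-x)^T1.card * ((goodSet A T2).card : ℝ)) * 2 ^ Fintype.card ι := by ring
          _ ≤ x * (goodSet A T).card * 2 ^ Fintype.card ι := by
              exact mul_le_mul_of_nonneg_right step4 (le_of_lt hpow)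
      exact le_of_mul_le_mul_right this hpow
  -- global: good J nonempty
  have main : ∀ U : Finset κ, U ⊆ J →
      (1-x) ^ U.card * ((2:ℝ) ^ Fintype.card ι) ≤ ((goodSet A U).card : ℝ) := by
    intro U
    induction U using Finset.induction_on with
    | empty =>
      intro _
      simp only [card_empty, pow_zero, one_mul]
      have : goodSet A (∅ : Finset κ) = univ := by
        ext σ; simp [goodSet]
      rw [this]
      simp [Fintype.card_fun]
    | @insert a U ha IHU =>
      intro hUJ
      have hUJ' : U ⊆ J := (Finset.insert_subset_iff.1 hUJ).2
      have haJ : a ∈ J := hUJ (mem_insert_self a U)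
      have hkey := key U.card U a (le_refl _) hUJ' haJ ha
      have hins := goodSet_insert A U a
      have hcard : ((goodSet A (insert a U)).card : ℝ)
          = (goodSet A U).card - ((goodSet A U ∩ A a).card : ℝ) := by
        rw [hins]
        have h' := Finset.card_inter_add_card_sdiff (goodSet A U) (A a)
        push_cast [← h']
        ring
      rw [hcard, Finset.card_insert_of_notMem ha]
      rw [Finset.inter_comm] at hkey
      have hIH := IHU hUJ'
      have hmul : (1-x) * ((1-x) ^ U.card * (2:ℝ) ^ Fintype.card ι)
          ≤ (1-x) * ((goodSet A U).card : ℝ) :=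
        mul_le_mul_of_nonneg_left hIH (le_of_lt h1x)
      calc (1-x) ^ (U.card + 1) * (2:ℝ) ^ Fintype.card ι
          = (1-x) * ((1-x) ^ U.card * (2:ℝ) ^ Fintype.card ι) := by ring
        _ ≤ (1-x) * ((goodSet A U).card : ℝ) := hmul
        _ ≤ ((goodSet A U).card : ℝ) - ((goodSet A U ∩ A a).card : ℝ) := by nlinarith [hkey]
  have hJ := main J (le_refl J)
  have hpos : 0 < ((goodSet A J).card : ℝ) := by
    have : (0:ℝ) < (1-x) ^ J.card * ((2:ℝ) ^ Fintype.card ι) := by positivity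
    linarith
  have : (goodSet A J).Nonempty := Finset.card_pos.1 (by exact_mod_cast hpos)
  obtain ⟨σ, hσ⟩ := this
  exact ⟨σ, by simpa [goodSet] using hσ⟩
end LLLabstract



private lemma exp_mul_pow (D : ℕ) (hD : 1 ≤ D) :
    1 ≤ Real.exp 1 * (1 - 1/(D:ℝ)) ^ (D-1) := by
  rcases eq_or_lt_of_le hD with h | h
  · rw [← h]
    simp only [Nat.cast_one, ne_eq, one_ne_zero, not_false_eq_true, div_self, sub_self,
      Nat.sub_self, pow_zero, mul_one]
    nlinarith [Real.add_one_le_exp 1]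
  · have ha1 : 1 ≤ D - 1 := by omega
    set a : ℕ := D - 1 with ha
    have haD : (D:ℝ) = (a:ℝ) + 1 := by
      have hD' : D = a + 1 := by omega
      rw [hD']; push_cast; ring
    have hap : (0:ℝ) < a := by exact_mod_cast Nat.lt_of_lt_of_le Nat.zero_lt_one ha1
    have h1 : ((a:ℝ)+1)/a ≤ Real.exp (1/a) := by
      have := Real.add_one_le_exp (1/(a:ℝ))
      calc ((a:ℝ)+1)/a = 1/(a:ℝ) + 1 := by field_simp; ring
        _ ≤ Real.exp (1/a) := this
    have h2 : (((a:ℝ)+1)/a) ^ a ≤ Real.exp 1 := by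
      calc (((a:ℝ)+1)/a) ^ a ≤ (Real.exp (1/a)) ^ a := by
            apply pow_le_pow_left₀ (by positivity) h1 a
        _ = Real.exp ((a:ℝ) * (1/a)) := (Real.exp_nat_mul _ a).symm
        _ = Real.exp 1 := by rw [mul_one_div, div_self (ne_of_gt hap)]
    have h3 : (1 - 1/(D:ℝ)) = (a:ℝ)/((a:ℝ)+1) := by
      rw [haD]; field_simp; ring
    have h4 : ((a:ℝ)/((a:ℝ)+1)) ^ a * (((a:ℝ)+1)/a) ^ a = 1 := by
      rw [← mul_pow]
      rw [div_mul_div_comm]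
      rw [mul_comm (a:ℝ) ((a:ℝ)+1), div_self (by positivity)]
      exact one_pow a
    have h5 : (0:ℝ) ≤ ((a:ℝ)/((a:ℝ)+1)) ^ a := by positivity
    calc (1:ℝ) = ((a:ℝ)/((a:ℝ)+1)) ^ a * (((a:ℝ)+1)/a) ^ a := h4.symm
      _ ≤ ((a:ℝ)/((a:ℝ)+1)) ^ a * Real.exp 1 := by
          exact mul_le_mul_of_nonneg_left h2 h5
      _ = Real.exp 1 * (1 - 1/(D:ℝ)) ^ (D-1) := by rw [h3]; ring

private lemma arith_bound (m c D : ℕ) (hm : m ≤ c) (hD3 : 3 ≤ D)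
    (hlll : Real.exp 1 * D * (2:ℝ) ^ ((1:ℤ) - (m:ℤ)) < 1) :
    2 * (2:ℝ) ^ (c - m) ≤ (1/(D:ℝ)) * (1 - 1/(D:ℝ)) ^ (D-1) * 2 ^ c := by
  have hDpos : (0:ℝ) < D := by exact_mod_cast Nat.lt_of_lt_of_le (by norm_num) hD3
  have hmpow : (0:ℝ) < 2 ^ m := by positivity
  have hz : (2:ℝ) ^ ((1:ℤ) - (m:ℤ)) = 2 / 2 ^ m := by
    rw [zpow_sub₀ (by norm_num : (2:ℝ) ≠ 0), zpow_one, zpow_natCast]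
  rw [hz] at hlll
  have h6 : Real.exp 1 * D * 2 < 2 ^ m := by
    have h7 : Real.exp 1 * D * (2 / 2 ^ m) = (Real.exp 1 * D * 2) / 2 ^ m := by ring
    rw [h7, div_lt_one hmpow] at hlll
    linarith
  have hsplit : (2:ℝ) ^ c = 2 ^ (c - m) * 2 ^ m := by
    rw [← pow_add]
    congr 1
    omega
  rw [hsplit]
  have hexp := exp_mul_pow D (by omega)
  have hpownn : (0:ℝ) ≤ (1 - 1/(D:ℝ)) ^ (D-1) := by
    have : (0:ℝ) ≤ 1 - 1/(D:ℝ) := by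
      rw [sub_nonneg, div_le_one hDpos]
      exact_mod_cast Nat.one_le_cast.2 (by omega)
    positivity
  have hkey : 2 ≤ (1/(D:ℝ)) * (1 - 1/(D:ℝ)) ^ (D-1) * 2 ^ m := by
    have hexp1 : (0:ℝ) < Real.exp 1 := Real.exp_pos 1
    -- 2^m > 2 * exp1 * D and (1/D)(1-1/D)^{D-1} ≥ 1/(exp1 * D)
    have step : (1/(D:ℝ)) * (1 - 1/(D:ℝ)) ^ (D-1) * 2 ^ m
        ≥ (1/(D:ℝ)) * (1 - 1/(D:ℝ)) ^ (D-1) * (Real.exp 1 * D * 2) := by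
      apply mul_le_mul_of_nonneg_left (le_of_lt h6)
      positivity
    have hrw : (1/(D:ℝ)) * (1 - 1/(D:ℝ)) ^ (D-1) * (Real.exp 1 * D * 2)
        = 2 * (Real.exp 1 * (1 - 1/(D:ℝ)) ^ (D-1)) := by
      field_simp
    rw [hrw] at step
    nlinarith [hexp]
  have hc : (0:ℝ) < 2 ^ (c-m) := by positivity
  calc 2 * (2:ℝ) ^ (c-m) = 2 ^ (c-m) * 2 := by ring
    _ ≤ 2 ^ (c-m) * ((1/(D:ℝ)) * (1 - 1/(D:ℝ)) ^ (D-1) * 2 ^ m) :=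
        mul_le_mul_of_nonneg_left hkey (le_of_lt hc)
    _ = (1/(D:ℝ)) * (1 - 1/(D:ℝ)) ^ (D-1) * (2 ^ (c-m) * 2 ^ m) := by ring



section
variable {n : ℕ}

/-- connecting edges of a vertex set `S` -/
private def conn (H : Finset (Finset (Fin n))) (S : Finset (Fin n)) : Finset (Finset (Fin n)) :=
  H.filter (fun h => (h ∩ S).card = 2)

private lemma uniq_edge (H : Finset (Finset (Fin n))) (hcov : ∀ u v : Fin n, u ≠ v → ∃! h, h ∈ H ∧ u ∈ h ∧ v ∈ h)
    {u v : Fin n} (huv : u ≠ v) {h h' : Finset (Fin n)}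
    (hh : h ∈ H) (hu : u ∈ h) (hv : v ∈ h)
    (hh' : h' ∈ H) (hu' : u ∈ h') (hv' : v ∈ h') : h = h' := by
  obtain ⟨g, -, hg⟩ := hcov u v huv
  rw [hg h ⟨hh, hu, hv⟩, hg h' ⟨hh', hu', hv'⟩]

private lemma card_conn (H : Finset (Finset (Fin n))) (hcov : ∀ u v : Fin n, u ≠ v → ∃! h, h ∈ H ∧ u ∈ h ∧ v ∈ h)
    (S : Finset (Fin n)) (hgen : ∀ h ∈ H, (h ∩ S).card ≤ 2) :
    (conn H S).card = S.card.choose 2 := by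
  rw [← Finset.card_powersetCard 2 S]
  apply Finset.card_bij (fun h _ => h ∩ S)
  · intro h hh
    rw [Finset.mem_powersetCard]
    exact ⟨inter_subset_right, (mem_filter.1 hh).2⟩
  · intro h hh h' hh' heq
    have h2 : (h ∩ S).card = 2 := (mem_filter.1 hh).2
    obtain ⟨u, v, huv, huv2⟩ := Finset.card_eq_two.1 h2
    have hu : u ∈ h ∩ S := huv2 ▸ (by simp)
    have hv : v ∈ h ∩ S := huv2 ▸ (by simp)
    have hu' : u ∈ h' ∩ S := heq ▸ hu
    have hv' : v ∈ h' ∩ S := heq ▸ hv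
    exact uniq_edge H hcov huv (mem_filter.1 hh).1 (mem_inter.1 hu).1 (mem_inter.1 hv).1
      (mem_filter.1 hh').1 (mem_inter.1 hu').1 (mem_inter.1 hv').1
  · intro p hp
    rw [Finset.mem_powersetCard] at hp
    obtain ⟨hpS, hp2⟩ := hp
    obtain ⟨u, v, huv, rfl⟩ := Finset.card_eq_two.1 hp2
    obtain ⟨h, ⟨hh, hu, hv⟩, -⟩ := hcov u v huv
    have hsub : {u, v} ⊆ h ∩ S := by
      intro z hz
      rcases Finset.mem_insert.1 hz with rfl | hz
      · exact mem_inter.2 ⟨hu, hpS (by simp)⟩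
      · rw [Finset.mem_singleton] at hz
        subst hz
        exact mem_inter.2 ⟨hv, hpS (by simp)⟩
    have hcard : (h ∩ S).card = 2 := by
      have h1 : 2 ≤ (h ∩ S).card := by
        calc 2 = ({u,v} : Finset (Fin n)).card := (Finset.card_pair huv).symm
          _ ≤ _ := card_le_card hsub
      exact le_antisymm (hgen h hh) h1
    refine ⟨h, mem_filter.2 ⟨hh, hcard⟩, ?_⟩
    exact (Finset.eq_of_subset_of_card_le hsub (by omega)).symm

/-- number of `t`-sets meeting a fixed `k`-set in exactly two points -/
private lemma card_meet (t : ℕ) (ht : 2 ≤ t) (h : Finset (Fin n)) :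
    ((univ : Finset (Finset (Fin n))).filter
        (fun S' => S'.card = t ∧ (h ∩ S').card = 2)).card
      ≤ h.card.choose 2 * (n - 2).choose (t - 2) := by
  have key : ((h.powersetCard 2).sigma
      (fun p => ((univ \ p).powersetCard (t-2)))).card
      = h.card.choose 2 * (n - 2).choose (t - 2) := by
    rw [Finset.card_sigma]
    have : ∀ p ∈ h.powersetCard 2, ((univ \ p).powersetCard (t-2)).card
        = (n-2).choose (t-2) := by
      intro p hp
      rw [Finset.mem_powersetCard] at hp
      rw [Finset.card_powersetCard, Finset.card_sdiff_of_subset (subset_univ p), hp.2,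
        Finset.card_univ, Fintype.card_fin]
    rw [Finset.sum_congr rfl this, Finset.sum_const, Finset.card_powersetCard, smul_eq_mul]
  rw [← key]
  apply Finset.card_le_card_of_injOn (fun S' => ⟨h ∩ S', S' \ h⟩)
  · intro S' hS'
    rw [mem_coe, mem_filter] at hS'
    obtain ⟨-, hSt, hS2⟩ := hS'
    rw [mem_coe, Finset.mem_sigma]
    constructor
    · rw [Finset.mem_powersetCard]
      exact ⟨inter_subset_left, hS2⟩
    · rw [Finset.mem_powersetCard]
      constructor
      · intro z hz
        rw [Finset.mem_sdiff] at hz ⊢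
        exact ⟨mem_univ z, fun hzp => hz.2 (mem_inter.1 hzp).1⟩
      · show (S' \ h).card = t - 2
        have h4 := Finset.card_inter_add_card_sdiff S' h
        have h3 : (S' ∩ h).card = 2 := by rw [Finset.inter_comm]; exact hS2
        omega
  · intro S1 h1 S2 h2 heq
    have e1 : h ∩ S1 = h ∩ S2 := congrArg Sigma.fst heq
    have e2 : S1 \ h = S2 \ h := congrArg Sigma.snd heq
    ext z
    have m1 : z ∈ S1 ↔ z ∈ h ∩ S1 ∨ z ∈ S1 \ h := by
      simp only [mem_inter, mem_sdiff]; tauto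
    have m2 : z ∈ S2 ↔ z ∈ h ∩ S2 ∨ z ∈ S2 \ h := by
      simp only [mem_inter, mem_sdiff]; tauto
    rw [m1, m2, e1, e2]
end


/-- Lovász Local Lemma step: if `H` is a `k`-uniform hypergraph on `n` vertices in
which every pair of distinct vertices lies in exactly one edge, and
`e·C(t,2)·C(k,2)·C(n-2,t-2)·2^(1-C(t,2)) < 1`, then `H` admits a 2-edge-coloring
with no monochromatic Berge copy of `K_t`. -/
theorem exists_coloring_no_mono_berge_clique (k t n : ℕ) (hk : 2 ≤ k) (ht : 3 ≤ t)
    (H : Finset (Finset (Fin n)))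
    (hunif : ∀ h ∈ H, h.card = k)
    (hcov : ∀ u v : Fin n, u ≠ v → ∃! h, h ∈ H ∧ u ∈ h ∧ v ∈ h)
    (hLLL : Real.exp 1 * (t.choose 2 : ℝ) * (k.choose 2 : ℝ) *
        ((n - 2).choose (t - 2) : ℝ) * (2 : ℝ) ^ ((1 : ℤ) - (t.choose 2 : ℤ)) < 1) :
    ∃ col : Finset (Fin n) → Bool,
      ∀ b : Bool, ¬ HasBergeCopy (⊤ : SimpleGraph (Fin t)) H (fun h => col h = b) := by
  classical
  by_cases htn : t ≤ n
  swap
  · refine ⟨fun _ => true, fun b hcopy => ?_⟩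
    obtain ⟨y, f, hy, -, -⟩ := hcopy
    have := Fintype.card_le_of_injective y hy
    simp only [Fintype.card_fin] at this
    omega
  -- abbreviations
  set m : ℕ := t.choose 2 with hm
  set D : ℕ := t.choose 2 * (k.choose 2 * (n-2).choose (t-2)) with hD
  have hm3 : 3 ≤ m := by
    calc 3 = Nat.choose 3 2 := by norm_num
      _ ≤ t.choose 2 := Nat.choose_le_choose 2 ht
  have hkpos : 1 ≤ k.choose 2 := Nat.choose_pos hk
  have hnpos : 1 ≤ (n-2).choose (t-2) := Nat.choose_pos (by omega)
  have hD3 : 3 ≤ D := by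
    calc 3 ≤ m := hm3
      _ = m * 1 := (mul_one m).symm
      _ ≤ m * (k.choose 2 * (n-2).choose (t-2)) := by
          apply Nat.mul_le_mul_left
          exact Nat.one_le_iff_ne_zero.2 (by positivity)
      _ = D := rfl
  have hDpos : (0:ℝ) < D := by
    have : (3:ℝ) ≤ D := by exact_mod_cast hD3
    linarith
  -- the bad-event family
  set B : Finset (Finset (Fin n)) :=
    univ.filter (fun S => S.card = t ∧ ∀ h ∈ H, (h ∩ S).card ≤ 2) with hB
  set A : Finset (Fin n) → Finset (Finset (Fin n) → Bool) :=
    fun S => univ.filter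
      (fun σ => (∀ h ∈ conn H S, σ h = true) ∨ (∀ h ∈ conn H S, σ h = false)) with hA
  have hBgen : ∀ S ∈ B, ∀ h ∈ H, (h ∩ S).card ≤ 2 := by
    intro S hS
    exact ((mem_filter.1 hS).2).2
  have hBcard : ∀ S ∈ B, S.card = t := fun S hS => ((mem_filter.1 hS).2).1
  have hconnB : ∀ S ∈ B, (conn H S).card = m := by
    intro S hS
    rw [card_conn H hcov S (hBgen S hS), hBcard S hS]
  -- LLL hypotheses
  have hdep : ∀ S, ∀ σ τ : Finset (Fin n) → Bool,
      (∀ h ∈ conn H S, σ h = τ h) → σ ∈ A S → τ ∈ A S := by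
    intro S σ τ hagree hσ
    simp only [hA, mem_filter, mem_univ, true_and] at hσ ⊢
    rcases hσ with h1 | h1
    · exact Or.inl (fun h hh => (hagree h hh).symm.trans (h1 h hh))
    · exact Or.inr (fun h hh => (hagree h hh).symm.trans (h1 h hh))
  have hsupp : ∀ S ∈ B, (conn H S).Nonempty := by
    intro S hS
    rw [← Finset.card_pos, hconnB S hS]
    omega
  have hΓ : ∀ S ∈ B,
      (B.filter (fun S' => ¬ Disjoint (conn H S) (conn H S'))).card ≤ (D-1) + 1 := by
    intro S hS
    have hDD : (D-1)+1 = D := by omega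
    rw [hDD]
    have hsub : B.filter (fun S' => ¬ Disjoint (conn H S) (conn H S'))
        ⊆ (conn H S).biUnion (fun h => univ.filter
            (fun S' : Finset (Fin n) => S'.card = t ∧ (h ∩ S').card = 2)) := by
      intro S' hS'
      rw [mem_filter] at hS'
      obtain ⟨hS'B, hnd⟩ := hS'
      obtain ⟨h, hh1, hh2⟩ := Finset.not_disjoint_iff.1 hnd
      rw [Finset.mem_biUnion]
      exact ⟨h, hh1, mem_filter.2 ⟨mem_univ _, hBcard S' hS'B, (mem_filter.1 hh2).2⟩⟩
    calc (B.filter (fun S' => ¬ Disjoint (conn H S) (conn H S'))).card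
        ≤ _ := card_le_card hsub
      _ ≤ ∑ h ∈ conn H S, (univ.filter
            (fun S' : Finset (Fin n) => S'.card = t ∧ (h ∩ S').card = 2)).card :=
          Finset.card_biUnion_le
      _ ≤ ∑ _h ∈ conn H S, k.choose 2 * (n-2).choose (t-2) := by
          apply Finset.sum_le_sum
          intro h hh
          have hhH : h ∈ H := (mem_filter.1 hh).1
          have := card_meet t (by omega) h
          rwa [hunif h hhH] at this
      _ = (conn H S).card * (k.choose 2 * (n-2).choose (t-2)) := by
          rw [Finset.sum_const, smul_eq_mul]
      _ = D := by rw [hconnB S hS]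
  have hp : ∀ S ∈ B, ((A S).card : ℝ)
      ≤ (1/(D:ℝ)) * (1 - 1/(D:ℝ))^(D-1) * 2 ^ Fintype.card (Finset (Fin n)) := by
    intro S hS
    set c := Fintype.card (Finset (Fin n)) with hc
    have hmc : m ≤ c := by
      rw [← hconnB S hS]
      exact Finset.card_le_univ _
    have hcardA : (A S).card ≤ 2 * 2 ^ (c - m) := by
      have hsub : A S ⊆ (univ.filter (fun σ : Finset (Fin n) → Bool =>
            ∀ h ∈ conn H S, σ h = true))
          ∪ (univ.filter (fun σ => ∀ h ∈ conn H S, σ h = false)) := by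
        intro σ hσ
        simp only [hA, mem_filter, mem_univ, true_and] at hσ
        rw [Finset.mem_union]
        rcases hσ with h1 | h1
        · exact Or.inl (mem_filter.2 ⟨mem_univ _, h1⟩)
        · exact Or.inr (mem_filter.2 ⟨mem_univ _, h1⟩)
      calc (A S).card ≤ _ := card_le_card hsub
        _ ≤ _ + _ := Finset.card_union_le _ _
        _ = 2 * 2 ^ (c - m) := by
            rw [card_fixed (conn H S) true, card_fixed (conn H S) false, hconnB S hS, hc]
            omega
    have hlll' : Real.exp 1 * D * (2:ℝ) ^ ((1:ℤ) - (m:ℤ)) < 1 := by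
      have : ((D:ℝ)) = (t.choose 2 : ℝ) * ((k.choose 2 : ℝ) * ((n-2).choose (t-2) : ℝ)) := by
        rw [hD]; push_cast; ring
      rw [this]
      calc Real.exp 1 * ((t.choose 2 : ℝ) * ((k.choose 2 : ℝ) * ((n-2).choose (t-2) : ℝ)))
            * (2:ℝ) ^ ((1:ℤ) - (m:ℤ))
          = Real.exp 1 * (t.choose 2 : ℝ) * (k.choose 2 : ℝ) *
            ((n - 2).choose (t - 2) : ℝ) * (2 : ℝ) ^ ((1 : ℤ) - (t.choose 2 : ℤ)) := by
            rw [hm]; ring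
        _ < 1 := hLLL
    have harith := arith_bound m c D hmc hD3 hlll'
    calc ((A S).card : ℝ) ≤ 2 * (2:ℝ) ^ (c - m) := by exact_mod_cast hcardA
      _ ≤ _ := harith
  -- apply LLL
  obtain ⟨σ, hσ⟩ := lll_main B (conn H) A hdep hsupp (D-1) (1/(D:ℝ))
    (by positivity)
    (by rw [div_lt_one hDpos]; exact_mod_cast by omega)
    hΓ hp
  refine ⟨σ, ?_⟩
  intro b hcopy
  obtain ⟨y, f, hy, hfinj, hmem⟩ := hcopy
  set S : Finset (Fin n) := (univ : Finset (Fin t)).image y with hSdef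
  have hScard : S.card = t := by
    rw [hSdef, Finset.card_image_of_injective _ hy, Finset.card_univ, Fintype.card_fin]
  have hedge : ∀ u v : Fin t, u ≠ v →
      s(u,v) ∈ (⊤ : SimpleGraph (Fin t)).edgeSet := by
    intro u v huv
    rw [SimpleGraph.mem_edgeSet, SimpleGraph.top_adj]
    exact huv
  have hfeq : ∀ u v : Fin t, ∀ (huv : u ≠ v), ∀ h ∈ H, y u ∈ h → y v ∈ h → f s(u,v) = h := by
    intro u v huv h hh hu hv
    obtain ⟨hfH, -, hfy⟩ := hmem s(u,v) (hedge u v huv)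
    exact uniq_edge H hcov (fun hyuv => huv (hy hyuv)) hfH
      (hfy u (Sym2.mem_iff.2 (Or.inl rfl))) (hfy v (Sym2.mem_iff.2 (Or.inr rfl))) hh hu hv
  have hgen : ∀ h ∈ H, (h ∩ S).card ≤ 2 := by
    intro h hh
    by_contra hlt
    push_neg at hlt
    obtain ⟨p, hpsub, hp3⟩ := Finset.exists_subset_card_eq hlt
    obtain ⟨a, b', c', hab, hac, hbc, rfl⟩ := Finset.card_eq_three.1 hp3
    have hamem := hpsub (by simp : a ∈ ({a,b',c'} : Finset (Fin n)))
    have hbmem := hpsub (by simp : b' ∈ ({a,b',c'} : Finset (Fin n)))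
    have hcmem := hpsub (by simp : c' ∈ ({a,b',c'} : Finset (Fin n)))
    obtain ⟨u, -, hu⟩ := Finset.mem_image.1 (mem_inter.1 hamem).2
    obtain ⟨v, -, hv⟩ := Finset.mem_image.1 (mem_inter.1 hbmem).2
    obtain ⟨w, -, hw⟩ := Finset.mem_image.1 (mem_inter.1 hcmem).2
    have huv : u ≠ v := fun h' => hab (hu ▸ hv ▸ h' ▸ rfl)
    have hvw : v ≠ w := fun h' => hbc (hv ▸ hw ▸ h' ▸ rfl)
    have huw : u ≠ w := fun h' => hac (hu ▸ hw ▸ h' ▸ rfl)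
    have e1 : f s(u,v) = h := hfeq u v huv h hh (hu ▸ (mem_inter.1 hamem).1)
      (hv ▸ (mem_inter.1 hbmem).1)
    have e2 : f s(v,w) = h := hfeq v w hvw h hh (hv ▸ (mem_inter.1 hbmem).1)
      (hw ▸ (mem_inter.1 hcmem).1)
    have := hfinj (hedge u v huv) (hedge v w hvw) (e1.trans e2.symm)
    rcases Sym2.eq_iff.1 this with ⟨h1, h2⟩ | ⟨h1, h2⟩
    · exact huv h1
    · exact huw h1
  have hSB : S ∈ B := mem_filter.2 ⟨mem_univ _, hScard, hgen⟩
  apply hσ S hSB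
  simp only [hA, mem_filter, mem_univ, true_and]
  have hall : ∀ h ∈ conn H S, σ h = b := by
    intro h hh
    obtain ⟨hhH, hh2⟩ := mem_filter.1 hh
    obtain ⟨a, b', hab, habe⟩ := Finset.card_eq_two.1 hh2
    have hamem : a ∈ h ∩ S := habe ▸ (by simp)
    have hbmem : b' ∈ h ∩ S := habe ▸ (by simp)
    obtain ⟨u, -, hu⟩ := Finset.mem_image.1 (mem_inter.1 hamem).2
    obtain ⟨v, -, hv⟩ := Finset.mem_image.1 (mem_inter.1 hbmem).2
    have huv : u ≠ v := fun h' => hab (hu ▸ hv ▸ h' ▸ rfl)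
    have e1 : f s(u,v) = h := hfeq u v huv h hhH (hu ▸ (mem_inter.1 hamem).1)
      (hv ▸ (mem_inter.1 hbmem).1)
    have := (hmem s(u,v) (hedge u v huv)).2.1
    rw [e1] at this
    exact this
  cases b
  · exact Or.inr hall
  · exact Or.inl hall
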